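/- Let A be a simple finite-dimensional algebra over a field F of characteristic zero with a comultiplication Δ such that the Drinfeld double D(A) is a direct sum A₁ ⊕ A₂ of two proper simple ideals. Then for each i = 1, 2 there exists a linear map φᵢ : A* → A such that f − φᵢ(f) ∈ Aᵢ for all f ∈ A*, and moreover Aᵢ = { f − φᵢ(f) : f ∈ A* }. -/

import Mathlib

open TensorProduct

/-- `I` is a (two-sided) ideal for the product `prod`. -/
def IsIdealP {F M : Type*} [Field F] [AddCommGroup M] [Module F M]
    (prod : M → M → M) (I : Submodule F M) : Prop :=
  ∀ x ∈ I, ∀ y : M, prod x y ∈ I ∧ prod y x ∈ I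

/-- The ideal `I` is simple as an algebra with the restricted product. -/
def IsSimpleIdealP {F M : Type*} [Field F] [AddCommGroup M] [Module F M]
    (prod : M → M → M) (I : Submodule F M) : Prop :=
  (∃ x ∈ I, ∃ y ∈ I, prod x y ≠ 0) ∧
    ∀ J : Submodule F M, J ≤ I →
      (∀ x ∈ J, ∀ y ∈ I, prod x y ∈ J ∧ prod y x ∈ J) → J = ⊥ ∨ J = I

/-- The multiplication of the Drinfeld double `D(A) = A ⊕ A*` associated with the
bilinear product `mul` and the comultiplication `Δ`:
`(a + f)(b + g) = (ab + f⇀b + a↼g) + (fg + f⇽b + a⇁g)`. -/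
noncomputable def dmul {F A : Type*} [Field F] [AddCommGroup A] [Module F A]
    (mul : A →ₗ[F] A →ₗ[F] A) (Δ : A →ₗ[F] A ⊗[F] A)
    (p q : A × Module.Dual F A) : A × Module.Dual F A :=
  (mul p.1 q.1
      + TensorProduct.rid F A (LinearMap.lTensor A p.2 (Δ q.1))
      + TensorProduct.lid F A (LinearMap.rTensor A q.2 (Δ p.1)),
    Δ.dualMap (TensorProduct.dualDistrib F A A (p.2 ⊗ₜ[F] q.2))
      + p.2.comp (mul q.1)
      + q.2.comp (mul.flip p.1))

section Aux

variable {F A : Type*} [Field F] [AddCommGroup A] [Module F A]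

/-- In a simple algebra, a functional vanishing on all products is zero. -/
lemma dual_zero_of_vanish_mul (mul : A →ₗ[F] A →ₗ[F] A)
    (hsimple : (∃ x y : A, mul x y ≠ 0) ∧
      ∀ I : Submodule F A, (∀ x ∈ I, ∀ y : A, mul x y ∈ I ∧ mul y x ∈ I) → I = ⊥ ∨ I = ⊤)
    (f : Module.Dual F A) (hf : ∀ b c : A, f (mul b c) = 0) : f = 0 := by
  set S : Set A := {z | ∃ b c : A, mul b c = z} with hS
  set I : Submodule F A := Submodule.span F S with hI
  have hSI : S ⊆ (I : Set A) := Submodule.subset_span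
  have hideal : ∀ x ∈ I, ∀ y : A, mul x y ∈ I ∧ mul y x ∈ I := fun x _ y =>
    ⟨hSI ⟨x, y, rfl⟩, hSI ⟨y, x, rfl⟩⟩
  rcases hsimple.2 I hideal with h | h
  · obtain ⟨x, y, hxy⟩ := hsimple.1
    have : mul x y ∈ I := hSI ⟨x, y, rfl⟩
    rw [h, Submodule.mem_bot] at this
    exact absurd this hxy
  · have hker : I ≤ LinearMap.ker f := by
      rw [hI, Submodule.span_le]
      rintro z ⟨b, c, rfl⟩
      exact hf b c
    have : LinearMap.ker f = ⊤ := top_unique (h ▸ hker)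
    exact LinearMap.ker_eq_top.mp this

/-- If `B`, `C` are disjoint ideals of the double and `C ≠ ⊥`, every element of `B`
with zero second component is zero. -/
lemma snd_injOn (mul : A →ₗ[F] A →ₗ[F] A)
    (hsimple : (∃ x y : A, mul x y ≠ 0) ∧
      ∀ I : Submodule F A, (∀ x ∈ I, ∀ y : A, mul x y ∈ I ∧ mul y x ∈ I) → I = ⊥ ∨ I = ⊤)
    (Δ : A →ₗ[F] A ⊗[F] A)
    (B C : Submodule F (A × Module.Dual F A)) (hCb : C ≠ ⊥)
    (hdis : Disjoint B C)
    (hidB : IsIdealP (dmul mul Δ) B) (hidC : IsIdealP (dmul mul Δ) C) :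
    ∀ p ∈ B, p.2 = 0 → p = 0 := by
  -- key: if all (a, 0) lie in B then C = ⊥
  have key : (∀ a : A, ((a, (0 : Module.Dual F A)) : A × Module.Dual F A) ∈ B) → C = ⊥ := by
    intro hall
    rw [Submodule.eq_bot_iff]
    intro p hp
    have hmem : ∀ b : A, dmul mul Δ p (b, 0) = 0 := by
      intro b
      have h1 : dmul mul Δ p (b, 0) ∈ B := (hidB _ (hall b) p).2
      have h2 : dmul mul Δ p (b, 0) ∈ C := (hidC p hp _).1
      exact (Submodule.mem_bot F).1 (hdis.le_bot ⟨h1, h2⟩)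
    have hp2 : p.2 = 0 := by
      apply dual_zero_of_vanish_mul mul hsimple
      intro b c
      have h := congrArg (fun q : A × Module.Dual F A => q.2 c) (hmem b)
      simpa [dmul] using h
    have hpB : p ∈ B := by
      have : p = (p.1, (0 : Module.Dual F A)) := by
        rw [← hp2]
      rw [this]
      exact hall p.1
    exact (Submodule.mem_bot F).1 (hdis.le_bot ⟨hpB, hp⟩)
  intro p hpB hp2
  set J : Submodule F A := Submodule.comap (LinearMap.inl F A (Module.Dual F A)) B with hJ
  have hprod : ∀ a b : A,
      dmul mul Δ ((a, (0 : Module.Dual F A))) ((b, (0 : Module.Dual F A)))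
        = ((mul a b, (0 : Module.Dual F A))) := by
    intro a b
    simp [dmul]
  have hJideal : ∀ x ∈ J, ∀ y : A, mul x y ∈ J ∧ mul y x ∈ J := by
    intro a ha b
    have ha' : ((a, (0 : Module.Dual F A)) : A × Module.Dual F A) ∈ B := ha
    constructor
    · have := (hidB _ ha' ((b, (0 : Module.Dual F A)))).1
      rw [hprod] at this
      exact this
    · have := (hidB _ ha' ((b, (0 : Module.Dual F A)))).2
      rw [hprod] at this
      exact this
  rcases hsimple.2 J hJideal with h | h
  · have hp1 : p.1 ∈ J := by
      show ((p.1, (0 : Module.Dual F A)) : A × Module.Dual F A) ∈ B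
      have : p = (p.1, (0 : Module.Dual F A)) := by rw [← hp2]
      rwa [← this]
    rw [h, Submodule.mem_bot] at hp1
    have : p = (p.1, p.2) := rfl
    rw [this, hp1, hp2]
    rfl
  · exfalso
    apply hCb
    apply key
    intro a
    have : a ∈ J := h ▸ Submodule.mem_top
    exact this

/-- Build the graph map for an ideal on which the second projection is injective and
which has the dimension of `A*`. -/
lemma graph_of_inj [FiniteDimensional F A]
    (B : Submodule F (A × Module.Dual F A))
    (hinj : ∀ p ∈ B, p.2 = 0 → p = 0)
    (hrank : Module.finrank F B = Module.finrank F (Module.Dual F A)) :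
    ∃ φ : Module.Dual F A →ₗ[F] A,
      (∀ f : Module.Dual F A, ((-φ f, f) : A × Module.Dual F A) ∈ B) ∧
      (B : Set (A × Module.Dual F A))
        = Set.range (fun f : Module.Dual F A => ((-φ f, f) : A × Module.Dual F A)) := by
  classical
  set π : B →ₗ[F] Module.Dual F A :=
    (LinearMap.snd F A (Module.Dual F A)).comp B.subtype with hπ
  have hπinj : Function.Injective π := by
    intro x y hxy
    have hxy' : ((x : A × Module.Dual F A)).2 = ((y : A × Module.Dual F A)).2 := hxy
    have hmem : ((x : A × Module.Dual F A) - (y : A × Module.Dual F A)) ∈ B :=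
      sub_mem x.2 y.2
    have h2 : ((x : A × Module.Dual F A) - (y : A × Module.Dual F A)).2 = 0 := by
      show ((x : A × Module.Dual F A)).2 - ((y : A × Module.Dual F A)).2 = 0
      rw [hxy', sub_self]
    have h3 := hinj _ hmem h2
    exact Subtype.ext (sub_eq_zero.mp h3)
  let e : B ≃ₗ[F] Module.Dual F A :=
    LinearMap.linearEquivOfInjective (K := F) (V := B) (V₂ := Module.Dual F A) π hπinj hrank
  have he : ∀ x : B, e x = ((x : A × Module.Dual F A)).2 := fun x => rfl
  refine ⟨-((LinearMap.fst F A (Module.Dual F A)).comp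
      (B.subtype.comp (e.symm : Module.Dual F A →ₗ[F] B))), ?_, ?_⟩
  · intro f
    have h2 : (((e.symm f : B) : A × Module.Dual F A)).2 = f := by
      have := e.apply_symm_apply f
      rw [← he (e.symm f)]
      exact this
    have : ((-(-((LinearMap.fst F A (Module.Dual F A)).comp
        (B.subtype.comp (e.symm : Module.Dual F A →ₗ[F] B)))) f, f)
          : A × Module.Dual F A) = ((e.symm f : B) : A × Module.Dual F A) := by
      apply Prod.ext
      · simp
      · exact h2.symm
    rw [this]
    exact (e.symm f : B).2
  · ext p
    simp only [Set.mem_range, SetLike.mem_coe]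
    constructor
    · intro hp
      refine ⟨p.2, ?_⟩
      have hesymm : e.symm p.2 = ⟨p, hp⟩ := by
        rw [LinearEquiv.symm_apply_eq]
        exact (he ⟨p, hp⟩).symm
      apply Prod.ext
      · simp [hesymm]
      · rfl
    · rintro ⟨f, rfl⟩
      have h2 : (((e.symm f : B) : A × Module.Dual F A)).2 = f := by
        have := e.apply_symm_apply f
        rw [← he (e.symm f)]
        exact this
      have : ((-(-((LinearMap.fst F A (Module.Dual F A)).comp
          (B.subtype.comp (e.symm : Module.Dual F A →ₗ[F] B)))) f, f)
            : A × Module.Dual F A) = ((e.symm f : B) : A × Module.Dual F A) := by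
        apply Prod.ext
        · simp
        · exact h2.symm
      rw [this]
      exact (e.symm f : B).2

end Aux

theorem stmt2 {F A : Type*} [Field F] [CharZero F] [AddCommGroup A] [Module F A]
    [FiniteDimensional F A] (mul : A →ₗ[F] A →ₗ[F] A)
    -- `A` is simple
    (hsimple : (∃ x y : A, mul x y ≠ 0) ∧
      ∀ I : Submodule F A, (∀ x ∈ I, ∀ y : A, mul x y ∈ I ∧ mul y x ∈ I) → I = ⊥ ∨ I = ⊤)
    -- a comultiplication on `A`
    (Δ : A →ₗ[F] A ⊗[F] A)
    -- `D(A) = A₁ ⊕ A₂`, a direct sum of two proper simple ideals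
    (A₁ A₂ : Submodule F (A × Module.Dual F A))
    (h1b : A₁ ≠ ⊥) (h1t : A₁ ≠ ⊤) (h2b : A₂ ≠ ⊥) (h2t : A₂ ≠ ⊤)
    (hcompl : IsCompl A₁ A₂)
    (hid1 : IsIdealP (dmul mul Δ) A₁) (hid2 : IsIdealP (dmul mul Δ) A₂)
    (hs1 : IsSimpleIdealP (dmul mul Δ) A₁) (hs2 : IsSimpleIdealP (dmul mul Δ) A₂)
    :
    ∃ φ₁ φ₂ : Module.Dual F A →ₗ[F] A,
      (∀ f : Module.Dual F A, ((-φ₁ f, f) : A × Module.Dual F A) ∈ A₁) ∧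
      (∀ f : Module.Dual F A, ((-φ₂ f, f) : A × Module.Dual F A) ∈ A₂) ∧
      (A₁ : Set (A × Module.Dual F A)) = Set.range (fun f : Module.Dual F A => (-φ₁ f, f)) ∧
      (A₂ : Set (A × Module.Dual F A)) = Set.range (fun f : Module.Dual F A => (-φ₂ f, f)) := by
  classical
  have hdis : Disjoint A₁ A₂ := hcompl.disjoint
  have hinj1 := snd_injOn mul hsimple Δ A₁ A₂ h2b hdis hid1 hid2
  have hinj2 := snd_injOn mul hsimple Δ A₂ A₁ h1b hdis.symm hid2 hid1
  -- dimension count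
  have hdual : Module.finrank F (Module.Dual F A) = Module.finrank F A :=
    Subspace.dual_finrank_eq
  have hD : Module.finrank F (A × Module.Dual F A)
      = Module.finrank F A + Module.finrank F A := by
    rw [Module.finrank_prod, hdual]
  have hsum := Submodule.finrank_add_eq_of_isCompl hcompl
  have hle : ∀ (B C : Submodule F (A × Module.Dual F A)),
      (∀ p ∈ B, p.2 = 0 → p = 0) →
      Module.finrank F B ≤ Module.finrank F (Module.Dual F A) := by
    intro B C hinj
    have hπinj : Function.Injective
        ((LinearMap.snd F A (Module.Dual F A)).comp B.subtype) := by
      intro x y hxy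
      have hxy' : ((x : A × Module.Dual F A)).2 = ((y : A × Module.Dual F A)).2 := hxy
      have hmem : ((x : A × Module.Dual F A) - (y : A × Module.Dual F A)) ∈ B :=
        sub_mem x.2 y.2
      have h2 : ((x : A × Module.Dual F A) - (y : A × Module.Dual F A)).2 = 0 := by
        show ((x : A × Module.Dual F A)).2 - ((y : A × Module.Dual F A)).2 = 0
        rw [hxy', sub_self]
      have h3 := hinj _ hmem h2
      exact Subtype.ext (sub_eq_zero.mp h3)
    exact LinearMap.finrank_le_finrank_of_injective hπinj
  have hle1 := hle A₁ A₂ hinj1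
  have hle2 := hle A₂ A₁ hinj2
  have hrank1 : Module.finrank F A₁ = Module.finrank F (Module.Dual F A) := by
    rw [hD] at hsum
    omega
  have hrank2 : Module.finrank F A₂ = Module.finrank F (Module.Dual F A) := by
    rw [hD] at hsum
    omega
  obtain ⟨φ₁, hφ₁, hr₁⟩ := graph_of_inj A₁ hinj1 hrank1
  obtain ⟨φ₂, hφ₂, hr₂⟩ := graph_of_inj A₂ hinj2 hrank2
  exact ⟨φ₁, φ₂, hφ₁, hφ₂, hr₁, hr₂⟩
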